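/- Let E be a complex Banach space, U an open neighborhood of a point P ∈ E, and let S, L, F : E → E satisfy S(F(x)) + L(F(x)) = S(x) for all x ∈ U. Assume that F is continuous at P with F(P) = P and is Fréchet differentiable on U, that S and L are Fréchet differentiable on U with derivative maps Σ := DS and Λ := DL continuous at P, that Λ(x) is invertible for every x ∈ U with x ↦ Λ(x)⁻¹ continuous at P, and that Λ(x)⁻¹ ∘ Σ(x) → 0 in operator norm as x → P. Then the derivative of F tends to zero at P: DF(x) → 0 in operator norm as x → P; in particular DF(P) = 0 whenever F is differentiable at P, so every eigenvalue of DF(P) has modulus less than 1. -/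

import Mathlib

open Filter Topology

/-- If `S (F x) + L (F x) = S x` on an open neighborhood `U` of `P`, `F` fixes `P` and is
continuous there, `S`, `L`, `F` are differentiable on `U` with `Σ = DS`, `Λ = DL` continuous
at `P`, `Λ x` invertible with continuous inverse at `P`, and `Λ(x)⁻¹ ∘ Σ(x) → 0` as `x → P`,
then `DF(x) → 0` as `x → P`; in particular `DF(P) = 0`, so every eigenvalue of `DF(P)` has
modulus less than `1`. -/
theorem stmt_2 {E : Type*} [NormedAddCommGroup E] [NormedSpace ℂ E] [CompleteSpace E]
    (U : Set E) (hU : IsOpen U) (P : E) (hP : P ∈ U) (S L F : E → E)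
    (heq : ∀ x ∈ U, S (F x) + L (F x) = S x)
    (hFc : ContinuousAt F P) (hFP : F P = P)
    (hFd : ∀ x ∈ U, DifferentiableAt ℂ F x)
    (hSd : ∀ x ∈ U, DifferentiableAt ℂ S x)
    (hLd : ∀ x ∈ U, DifferentiableAt ℂ L x)
    (hSigc : ContinuousAt (fun x => fderiv ℂ S x) P)
    (hLamc : ContinuousAt (fun x => fderiv ℂ L x) P)
    (Λinv : E → (E →L[ℂ] E))
    (hΛinv : ∀ x ∈ U, (fderiv ℂ L x).comp (Λinv x) = ContinuousLinearMap.id ℂ E ∧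
      (Λinv x).comp (fderiv ℂ L x) = ContinuousLinearMap.id ℂ E)
    (hΛinvc : ContinuousAt Λinv P)
    (hlim : Tendsto (fun x => (Λinv x).comp (fderiv ℂ S x)) (𝓝 P) (𝓝 0)) :
    Tendsto (fun x => fderiv ℂ F x) (𝓝 P) (𝓝 0) ∧
      fderiv ℂ F P = 0 ∧
      ∀ μ : ℂ, Module.End.HasEigenvalue (fderiv ℂ F P : E →ₗ[ℂ] E) μ → ‖μ‖ < 1 := by
  have hFtend : Tendsto F (𝓝 P) (𝓝 P) := by simpa [hFP] using hFc.tendsto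
  have hcomp : Continuous (fun p : (E →L[ℂ] E) × (E →L[ℂ] E) => p.1.comp p.2) :=
    isBoundedBilinearMap_comp.continuous
  -- key differentiated identity
  have key : ∀ x ∈ U, F x ∈ U →
      (fderiv ℂ S (F x)).comp (fderiv ℂ F x) + (fderiv ℂ L (F x)).comp (fderiv ℂ F x)
        = fderiv ℂ S x := by
    intro x hx hFx
    have hEq : (fun y => S (F y) + L (F y)) =ᶠ[𝓝 x] S := by
      filter_upwards [hU.mem_nhds hx] with y hy using heq y hy
    have h1 : fderiv ℂ (fun y => S (F y) + L (F y)) x = fderiv ℂ S x := hEq.fderiv_eq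
    have hSF : DifferentiableAt ℂ (fun y => S (F y)) x :=
      (hSd _ hFx).comp x (hFd x hx)
    have hLF : DifferentiableAt ℂ (fun y => L (F y)) x :=
      (hLd _ hFx).comp x (hFd x hx)
    rw [fderiv_fun_add hSF hLF] at h1
    rwa [show fderiv ℂ (fun y => S (F y)) x = (fderiv ℂ S (F x)).comp (fderiv ℂ F x) from
        fderiv_comp x (hSd _ hFx) (hFd x hx),
      show fderiv ℂ (fun y => L (F y)) x = (fderiv ℂ L (F x)).comp (fderiv ℂ F x) from
        fderiv_comp x (hLd _ hFx) (hFd x hx)] at h1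
  -- Λinv P ∘ Σ P = 0
  have hzero : (Λinv P).comp (fderiv ℂ S P) = 0 := by
    refine tendsto_nhds_unique ?_ hlim
    exact (hcomp.tendsto _).comp (hΛinvc.prodMk hSigc)
  -- the two auxiliary limits
  have hg : Tendsto (fun x => (Λinv (F x)).comp (fderiv ℂ S x)) (𝓝 P) (𝓝 0) := by
    have h1 : Tendsto (fun x => Λinv (F x)) (𝓝 P) (𝓝 (Λinv P)) :=
      (hΛinvc.tendsto).comp hFtend
    have := (hcomp.tendsto ((Λinv P), fderiv ℂ S P)).comp (h1.prodMk_nhds hSigc.tendsto)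
    rwa [Function.comp_def, hzero] at this
  have hh : Tendsto (fun x => (Λinv (F x)).comp (fderiv ℂ S (F x))) (𝓝 P) (𝓝 0) :=
    hlim.comp hFtend
  -- the resolved identity for DF
  have keyF : ∀ x ∈ U, F x ∈ U → fderiv ℂ F x =
      (Λinv (F x)).comp (fderiv ℂ S x)
        - ((Λinv (F x)).comp (fderiv ℂ S (F x))).comp (fderiv ℂ F x) := by
    intro x hx hFx
    have h := congrArg (fun T => (Λinv (F x)).comp T) (key x hx hFx)
    simp only [ContinuousLinearMap.comp_add, ← ContinuousLinearMap.comp_assoc,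
      (hΛinv _ hFx).2, ContinuousLinearMap.id_comp] at h
    rw [eq_sub_iff_add_eq, add_comm]
    exact h
  -- tendsto
  have hmain : Tendsto (fun x => fderiv ℂ F x) (𝓝 P) (𝓝 0) := by
    apply squeeze_zero_norm' (a := fun x => 2 * ‖(Λinv (F x)).comp (fderiv ℂ S x)‖)
    · have hUs : ∀ᶠ x in 𝓝 P, x ∈ U := hU.mem_nhds hP
      have hFUs : ∀ᶠ x in 𝓝 P, F x ∈ U := hFtend.eventually (hU.mem_nhds hP)
      have hsmall : ∀ᶠ x in 𝓝 P, ‖(Λinv (F x)).comp (fderiv ℂ S (F x))‖ ≤ 1/2 := by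
        have := hh.norm
        simp only [norm_zero] at this
        exact this.eventually_le_const (by norm_num)
      filter_upwards [hUs, hFUs, hsmall] with x hx hFx hsm
      have hid := keyF x hx hFx
      have h1 : ‖fderiv ℂ F x‖ ≤ ‖(Λinv (F x)).comp (fderiv ℂ S x)‖ +
          ‖(Λinv (F x)).comp (fderiv ℂ S (F x))‖ * ‖fderiv ℂ F x‖ := by
        calc ‖fderiv ℂ F x‖ = ‖(Λinv (F x)).comp (fderiv ℂ S x)
              - ((Λinv (F x)).comp (fderiv ℂ S (F x))).comp (fderiv ℂ F x)‖ := by rw [← hid]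
          _ ≤ ‖(Λinv (F x)).comp (fderiv ℂ S x)‖ +
              ‖((Λinv (F x)).comp (fderiv ℂ S (F x))).comp (fderiv ℂ F x)‖ := norm_sub_le _ _
          _ ≤ _ := by
              gcongr
              exact ((Λinv (F x)).comp (fderiv ℂ S (F x))).opNorm_comp_le _
      nlinarith [norm_nonneg (fderiv ℂ F x), norm_nonneg ((Λinv (F x)).comp (fderiv ℂ S x)),
        mul_le_mul_of_nonneg_right hsm (norm_nonneg (fderiv ℂ F x))]
    · have := hg.norm
      simp only [norm_zero] at this
      simpa using this.const_mul (2:ℝ)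
  have hFP0 : fderiv ℂ F P = 0 := by
    have h := keyF P hP (by rw [hFP]; exact hP)
    rw [hFP, hzero] at h
    simpa using h
  refine ⟨hmain, hFP0, ?_⟩
  intro μ hμ
  obtain ⟨v, hv⟩ := hμ.exists_hasEigenvector
  have h0 : μ • v = 0 := by
    have := hv.apply_eq_smul
    rw [hFP0] at this
    simpa using this.symm
  rcases smul_eq_zero.mp h0 with h | h
  · simp [h]
  · exact absurd h hv.2
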